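/- (Proposition 1, ring part.) Let N ≥ 3 be an integer and let G_{N,r} be the spider web graph with r rings. For every integer k with 2 ≤ k ≤ r, the ring Cheeger constant satisfies ψ_{N,r}(k) ≤ √(2·(1 − cos(π(k−1)/(r−1)))); that is, there exists a ring partition S_1, ..., S_k of G_{N,r} into k parts with max_{1 ≤ i ≤ k} Cut(S_i)/Volume(S_i) ≤ √(2λ^P_k), where λ^P_k = 1 − cos(π(k−1)/(r−1)) is the k-th eigenvalue of the normalized Laplacian of the path graph on r vertices. -/

import Mathlib

/-- The spider web graph `G_{N,r}`: the simple graph on vertex set `ZMod N × Fin r` in which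
`(i,j)` and `(i',j')` are adjacent iff (`j = j'` and `i' = i ± 1 mod N`) or (`i = i'` and
`|j - j'| = 1`); realized as the box (Cartesian) product of the cycle graph on `ZMod N`
(the circulant graph with jump `1`) with the path graph on `Fin r`. -/
def spiderWeb (N r : ℕ) : SimpleGraph (ZMod N × Fin r) :=
  SimpleGraph.boxProd (SimpleGraph.circulantGraph {(1 : ZMod N)}) (SimpleGraph.pathGraph r)

/-- `cut G S`: the number of edges of `G` with exactly one endpoint in `S`, counted as the
number of ordered pairs `(u, v)` with `u ∈ S`, `v ∉ S` and `u ~ v` (each such edge is counted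
exactly once this way). -/
noncomputable def cut {V : Type*} (G : SimpleGraph V) (S : Set V) : ℕ :=
  Set.ncard {p : V × V | p.1 ∈ S ∧ p.2 ∉ S ∧ G.Adj p.1 p.2}

/-- `volume G S`: the sum of the degrees of the vertices in `S`, counted as the number of
ordered pairs `(u, v)` with `u ∈ S` and `u ~ v`. -/
noncomputable def volume {V : Type*} (G : SimpleGraph V) (S : Set V) : ℕ :=
  Set.ncard {p : V × V | p.1 ∈ S ∧ G.Adj p.1 p.2}

/-- `I ⊆ ZMod N` is an arc of cardinality `c`: `I = {a, a+1, ..., a+c-1}` (mod `N`). -/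
def IsArc (N : ℕ) (I : Set (ZMod N)) (c : ℕ) : Prop :=
  ∃ a : ZMod N, I = (fun t : ℕ => a + (t : ZMod N)) '' Set.Iio c

/-- A wedge partition of the vertex set of the spider web graph `G_{N,r}` into `k` parts:
the parts are `A 1 × Fin r, ..., A k × Fin r` where the `A i` are pairwise disjoint
nonempty arcs of `ZMod N` whose union is all of `ZMod N`. -/
def IsWedgePartition (N r k : ℕ) (S : Fin k → Set (ZMod N × Fin r)) : Prop :=
  ∃ A : Fin k → Set (ZMod N),
    (∀ i, ∃ c, 1 ≤ c ∧ IsArc N (A i) c) ∧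
    Pairwise (Function.onFun Disjoint A) ∧
    (⋃ i, A i) = Set.univ ∧
    ∀ i, S i = A i ×ˢ (Set.univ : Set (Fin r))

/-- `B ⊆ Fin r` is an interval: a set of consecutive integers `{a, a+1, ..., b}` with
`a ≤ b < r` (in particular, it is nonempty). -/
def IsInterval (r : ℕ) (B : Set (Fin r)) : Prop :=
  ∃ a b : ℕ, a ≤ b ∧ b < r ∧ B = {j : Fin r | a ≤ (j : ℕ) ∧ (j : ℕ) ≤ b}

/-- A ring partition of the vertex set of the spider web graph `G_{N,r}` into `k` parts:
the parts are `ZMod N × B 1, ..., ZMod N × B k` where the `B i` are pairwise disjoint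
nonempty intervals of `Fin r` whose union is all of `Fin r`. -/
def IsRingPartition (N r k : ℕ) (S : Fin k → Set (ZMod N × Fin r)) : Prop :=
  ∃ B : Fin k → Set (Fin r),
    (∀ i, IsInterval r (B i)) ∧
    Pairwise (Function.onFun Disjoint B) ∧
    (⋃ i, B i) = Set.univ ∧
    ∀ i, S i = (Set.univ : Set (ZMod N)) ×ˢ B i

/-- The wedge Cheeger constant `φ_{N,r}(k)`: the minimum over all wedge partitions
`S 1, ..., S k` of `G_{N,r}` of `max_i Cut(S i)/Volume(S i)`. -/
noncomputable def wedgeCheeger (N r k : ℕ) : ℝ :=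
  sInf {x : ℝ | ∃ S : Fin k → Set (ZMod N × Fin r), IsWedgePartition N r k S ∧
    x = ⨆ i, (cut (spiderWeb N r) (S i) : ℝ) / (volume (spiderWeb N r) (S i) : ℝ)}

/-- The ring Cheeger constant `ψ_{N,r}(k)`: the minimum over all ring partitions
`S 1, ..., S k` of `G_{N,r}` of `max_i Cut(S i)/Volume(S i)`. -/
noncomputable def ringCheeger (N r k : ℕ) : ℝ :=
  sInf {x : ℝ | ∃ S : Fin k → Set (ZMod N × Fin r), IsRingPartition N r k S ∧
    x = ⨆ i, (cut (spiderWeb N r) (S i) : ℝ) / (volume (spiderWeb N r) (S i) : ℝ)}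


section SpiderWebHelpers

lemma cut_le (N r a b : ℕ) (hN : 3 ≤ N) :
    cut (spiderWeb N r)
      (Set.univ ×ˢ {j : Fin r | a ≤ j.val ∧ j.val ≤ b}) ≤ 2 * N := by
  haveI : NeZero N := ⟨by omega⟩
  have key := Set.ncard_le_ncard_of_injOn
    (f := fun p : (ZMod N × Fin r) × (ZMod N × Fin r) =>
      (p.1.1, decide (p.2.2.val < p.1.2.val)))
    (s := {p : (ZMod N × Fin r) × (ZMod N × Fin r) |
      p.1 ∈ (Set.univ ×ˢ {j : Fin r | a ≤ j.val ∧ j.val ≤ b}) ∧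
      p.2 ∉ (Set.univ ×ˢ {j : Fin r | a ≤ j.val ∧ j.val ≤ b}) ∧ (spiderWeb N r).Adj p.1 p.2})
    (t := (Set.univ : Set (ZMod N × Bool)))
    (fun p _ => Set.mem_univ _) ?_ Set.finite_univ
  · refine le_trans key ?_
    rw [Set.ncard_univ, Nat.card_prod, Nat.card_zmod, Nat.card_eq_fintype_card]
    simp [mul_comm]
  · intro p hp q hq heq
    simp only [Set.mem_setOf_eq, Set.mem_prod, Set.mem_univ, true_and] at hp hq
    obtain ⟨hp1, hp2, hp3⟩ := hp
    obtain ⟨hq1, hq2, hq3⟩ := hq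
    -- analyze adjacency for p
    have hfact : ∀ (x : (ZMod N × Fin r) × (ZMod N × Fin r)),
        (a ≤ x.1.2.val ∧ x.1.2.val ≤ b) → ¬(a ≤ x.2.2.val ∧ x.2.2.val ≤ b) →
        (spiderWeb N r).Adj x.1 x.2 →
        x.1.1 = x.2.1 ∧ ((x.1.2.val = b ∧ x.2.2.val = b + 1) ∨
          (x.1.2.val = a ∧ x.2.2.val + 1 = a)) := by
      intro x h1 h2 h3
      rcases h3 with ⟨_, he⟩ | ⟨hpa, he⟩
      · exact absurd (he ▸ h2) (by simpa using h1)
      · rw [SimpleGraph.pathGraph_adj] at hpa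
        exact ⟨he, by omega⟩
    have Hp := hfact p hp1 hp2 hp3
    have Hq := hfact q hq1 hq2 hq3
    simp only [Prod.mk.injEq, decide_eq_decide] at heq
    have h11 : p.1.1 = q.1.1 := heq.1
    have hbool : (p.2.2.val < p.1.2.val) ↔ (q.2.2.val < q.1.2.val) := heq.2
    have hv1 : p.1.2.val = q.1.2.val := by omega
    have hv2 : p.2.2.val = q.2.2.val := by omega
    have e1 : p.1 = q.1 := Prod.ext h11 (Fin.ext hv1)
    have e2 : p.2 = q.2 := Prod.ext (by rw [← Hp.1, ← Hq.1, h11]) (Fin.ext hv2)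
    exact Prod.ext e1 e2

lemma vol_ge (N r a b m : ℕ) (hN : 3 ≤ N) (hr : 2 ≤ r) (hb : b < r) (hm : a + m ≤ b + 1) :
    3 * N * m ≤ volume (spiderWeb N r)
      (Set.univ ×ˢ {j : Fin r | a ≤ j.val ∧ j.val ≤ b}) := by
  haveI : NeZero N := ⟨by omega⟩
  have h1 : (1 : ZMod N) ≠ 0 := by
    intro h
    rw [show (1 : ZMod N) = ((1 : ℕ) : ZMod N) by norm_num,
      ZMod.natCast_eq_zero_iff] at h
    exact absurd (Nat.le_of_dvd one_pos h) (by omega)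
  have h2 : (2 : ZMod N) ≠ 0 := by
    intro h
    rw [show (2 : ZMod N) = ((2 : ℕ) : ZMod N) by norm_num,
      ZMod.natCast_eq_zero_iff] at h
    exact absurd (Nat.le_of_dvd two_pos h) (by omega)
  -- vertical neighbor
  set vert : Fin r → Fin r := fun j =>
    if h : j.val + 1 < r then ⟨j.val + 1, h⟩ else ⟨j.val - 1, by omega⟩ with hvert
  have hvertne : ∀ j : Fin r, vert j ≠ j := by
    intro j hj
    have := congrArg Fin.val hj
    simp only [hvert] at this
    split_ifs at this <;> simp at this <;> omega
  have hvertadj : ∀ j : Fin r, (SimpleGraph.pathGraph r).Adj j (vert j) := by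
    intro j
    rw [SimpleGraph.pathGraph_adj]
    simp only [hvert]
    split_ifs with h
    · left; simp
    · right; simp; omega
  have adjR : ∀ (x : ZMod N) (j : Fin r), (spiderWeb N r).Adj (x, j) (x + 1, j) := by
    intro x j
    refine Or.inl ⟨⟨fun h => h1 ?_, Or.inr (by simp)⟩, rfl⟩
    have h' : x = x + 1 := h
    linear_combination -h'
  have adjL : ∀ (x : ZMod N) (j : Fin r), (spiderWeb N r).Adj (x, j) (x - 1, j) := by
    intro x j
    refine Or.inl ⟨⟨fun h => h1 ?_, Or.inl (by simp)⟩, rfl⟩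
    have h' : x = x - 1 := h
    linear_combination h'
  have adjV : ∀ (x : ZMod N) (j : Fin r), (spiderWeb N r).Adj (x, j) (x, vert j) :=
    fun x j => Or.inr ⟨hvertadj j, rfl⟩
  set nbr : (ZMod N × Fin r) → Fin 3 → (ZMod N × Fin r) := fun u s =>
    if s.val = 0 then (u.1 + 1, u.2) else if s.val = 1 then (u.1 - 1, u.2)
    else (u.1, vert u.2) with hnbr
  have hadj : ∀ u s, (spiderWeb N r).Adj u (nbr u s) := by
    rintro ⟨x, j⟩ s
    simp only [hnbr]
    split_ifs with e0 e1
    · exact adjR x j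
    · exact adjL x j
    · exact adjV x j
  have hnbrinj : ∀ u s s', nbr u s = nbr u s' → s = s' := by
    rintro ⟨x, j⟩ s s' h
    have hs := s.isLt
    have hs' := s'.isLt
    apply Fin.ext
    by_contra hne
    simp only [hnbr] at h
    split_ifs at h with a1 a2 a3 a4 a5 a6 a7 a8
    all_goals
      first
      | omega
      | · simp only [Prod.mk.injEq] at h
          first
          | exact h2 (by linear_combination h.1)
          | exact h2 (by linear_combination -h.1)
          | exact hvertne _ h.2.symm
          | exact hvertne _ h.2
  -- the injection
  have key := Set.ncard_le_ncard_of_injOn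
    (f := fun q : ZMod N × Fin m × Fin 3 =>
      (((q.1, ⟨a + q.2.1.val, by omega⟩) : ZMod N × Fin r),
        nbr (q.1, ⟨a + q.2.1.val, by omega⟩) q.2.2))
    (s := (Set.univ : Set (ZMod N × Fin m × Fin 3)))
    (t := {p : (ZMod N × Fin r) × (ZMod N × Fin r) |
      p.1 ∈ (Set.univ ×ˢ {j : Fin r | a ≤ j.val ∧ j.val ≤ b}) ∧ (spiderWeb N r).Adj p.1 p.2})
    ?_ ?_ (Set.toFinite _)
  · refine le_trans (le_of_eq ?_) key
    rw [Set.ncard_univ, Nat.card_prod, Nat.card_prod, Nat.card_zmod,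
      Nat.card_eq_fintype_card, Nat.card_eq_fintype_card]
    simp; ring
  · intro q _
    refine ⟨⟨Set.mem_univ _, ?_⟩, hadj _ _⟩
    have := q.2.1.isLt
    simp only [Set.mem_setOf_eq]
    omega
  · rintro ⟨i, t, s⟩ - ⟨i', t', s'⟩ - h
    simp only [Prod.mk.injEq, Fin.mk.injEq] at h
    obtain ⟨⟨e1, e2⟩, e3⟩ := h
    have et : t = t' := Fin.ext (by omega)
    subst e1; subst et
    have es : s = s' := hnbrinj _ _ _ e3
    rw [es]

lemma target_ge (k r : ℕ) (hk : 2 ≤ k) (hkr : k ≤ r) :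
    2 * ((k : ℝ) - 1) / ((r : ℝ) - 1)
      ≤ Real.sqrt (2 * (1 - Real.cos (Real.pi * ((k : ℝ) - 1) / ((r : ℝ) - 1)))) := by
  have hr1 : (1 : ℝ) ≤ (r : ℝ) - 1 := by
    have : (2 : ℝ) ≤ (r : ℝ) := by exact_mod_cast (by omega : 2 ≤ r)
    linarith
  set c : ℝ := ((k : ℝ) - 1) / ((r : ℝ) - 1) with hc
  have hc0 : 0 ≤ c := by
    apply div_nonneg _ (by linarith)
    have : (1 : ℝ) ≤ (k : ℝ) := by exact_mod_cast (by omega : 1 ≤ k)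
    linarith
  have hc1 : c ≤ 1 := by
    rw [hc, div_le_one (by linarith)]
    have : (k : ℝ) ≤ (r : ℝ) := by exact_mod_cast hkr
    linarith
  have hpi := Real.pi_pos
  have hsin : c ≤ Real.sin (Real.pi * c / 2) := by
    have h := Real.mul_le_sin (x := Real.pi * c / 2) (by positivity)
      (by nlinarith)
    calc c = 2 / Real.pi * (Real.pi * c / 2) := by field_simp
    _ ≤ _ := h
  have hsq : 2 * (1 - Real.cos (Real.pi * c)) = (2 * Real.sin (Real.pi * c / 2)) ^ 2 := by
    have h := Real.sin_sq_eq_half_sub (Real.pi * c / 2)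
    rw [show 2 * (Real.pi * c / 2) = Real.pi * c by ring] at h
    linear_combination -4 * h
  rw [mul_div_assoc, mul_div_assoc, ← hc, hsq, Real.sqrt_sq (by linarith)]
  linarith

lemma nat_key (k r m : ℕ) (hk : 2 ≤ k) (hkr : k ≤ r) (hm : m = r / k) :
    r - 1 ≤ 3 * (k - 1) * m ∧ 1 ≤ m ∧ k * m ≤ r := by
  subst hm
  have hm1 : 1 ≤ r / k := (Nat.one_le_div_iff (by omega)).2 hkr
  have hkm : k * (r / k) ≤ r := by
    rw [mul_comm]; exact Nat.div_mul_le_self r k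
  refine ⟨?_, hm1, hkm⟩
  rcases Nat.exists_eq_add_of_le hk with ⟨k', rfl⟩
  rcases Nat.exists_eq_add_of_le hm1 with ⟨q', hq⟩
  have hmod : r % (2 + k') < 2 + k' := Nat.mod_lt _ (by omega)
  have hdm : (2 + k') * (r / (2 + k')) + r % (2 + k') = r := Nat.div_add_mod r (2 + k')
  rw [hq] at hdm ⊢
  rw [show 2 + k' - 1 = 1 + k' from by omega]
  generalize r % (2 + k') = s at hdm hmod
  suffices h : r ≤ 3 * (1 + k') * (1 + q') + 1 by omega
  nlinarith [hdm, hmod]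

lemma main_construction (N r k : ℕ) (hN : 3 ≤ N) (hk : 2 ≤ k) (hkr : k ≤ r) :
    ∃ S : Fin k → Set (ZMod N × Fin r), IsRingPartition N r k S ∧
      ∀ i, (cut (spiderWeb N r) (S i) : ℝ) / (volume (spiderWeb N r) (S i) : ℝ)
        ≤ 2 * ((k : ℝ) - 1) / ((r : ℝ) - 1) := by
  obtain ⟨hkey, hm1, hkm⟩ := nat_key k r (r / k) hk hkr rfl
  set m := r / k with hmdef
  set bnd : ℕ → ℕ := fun i => if i = k then r else i * m with hbnd
  have hstep : ∀ i, i < k → bnd i + m ≤ bnd (i + 1) := by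
    intro i hi
    simp only [hbnd]
    rw [if_neg (by omega)]
    have hexp : (i + 1) * m = i * m + m := by ring
    split_ifs with h
    · have h2 : (i + 1) * m ≤ k * m := Nat.mul_le_mul_right m (by omega)
      omega
    · omega
  have hmono : ∀ i j, i ≤ j → j ≤ k → bnd i ≤ bnd j := by
    intro i j hij hjk
    simp only [hbnd]
    split_ifs with h h2
    · omega
    · omega
    · calc i * m ≤ k * m := Nat.mul_le_mul_right m (by omega)
      _ ≤ r := hkm
    · exact Nat.mul_le_mul_right m hij
  have hfin : ∀ i : Fin k, bnd i.val + m ≤ bnd (i.val + 1) ∧ bnd (i.val + 1) ≤ r :=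
    fun i => ⟨hstep i.val i.isLt, by simpa [hbnd] using hmono (i.val + 1) k i.isLt le_rfl⟩
  refine ⟨fun i => (Set.univ : Set (ZMod N)) ×ˢ
      {j : Fin r | bnd i.val ≤ j.val ∧ j.val ≤ bnd (i.val + 1) - 1},
    ⟨fun i => {j : Fin r | bnd i.val ≤ j.val ∧ j.val ≤ bnd (i.val + 1) - 1},
      ?_, ?_, ?_, fun i => rfl⟩, ?_⟩
  · -- intervals
    intro i
    obtain ⟨h1, h2⟩ := hfin i
    exact ⟨bnd i.val, bnd (i.val + 1) - 1, by omega, by omega, rfl⟩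
  · -- pairwise disjoint
    have key2 : ∀ u v : Fin k, u.val < v.val → ∀ j : Fin r,
        j ∈ {j : Fin r | bnd u.val ≤ j.val ∧ j.val ≤ bnd (u.val + 1) - 1} →
        j ∈ {j : Fin r | bnd v.val ≤ j.val ∧ j.val ≤ bnd (v.val + 1) - 1} → False := by
      intro u v huv j hj1 hj2
      simp only [Set.mem_setOf_eq] at hj1 hj2
      obtain ⟨hu1, _⟩ := hfin u
      have hle : bnd (u.val + 1) ≤ bnd v.val := hmono _ _ (by omega) (by omega)
      omega
    intro u v huv
    rcases Nat.lt_or_ge u.val v.val with h | h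
    · exact Set.disjoint_left.2 fun j hj1 hj2 => key2 u v h j hj1 hj2
    · have h' : v.val < u.val := by
        rcases Nat.lt_or_ge v.val u.val with h2 | h2
        · exact h2
        · exact absurd (Fin.ext (by omega)) huv
      exact (Set.disjoint_right.2 fun j hj1 hj2 => key2 v u h' j hj1 hj2)
  · -- union
    ext j
    simp only [Set.mem_iUnion, Set.mem_setOf_eq, Set.mem_univ, iff_true]
    have hjm : m * (j.val / m) + j.val % m = j.val := Nat.div_add_mod _ m
    have hjmod : j.val % m < m := Nat.mod_lt _ (by omega)
    have hjr := j.isLt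
    rcases le_or_gt (k - 1) (j.val / m) with hcase | hcase
    · refine ⟨⟨k - 1, by omega⟩, ?_, ?_⟩
      · simp only [hbnd]
        rw [if_neg (by omega)]
        calc (k - 1) * m ≤ (j.val / m) * m := Nat.mul_le_mul_right m hcase
        _ ≤ j.val := Nat.div_mul_le_self _ _
      · simp only [hbnd]
        rw [show (k - 1) + 1 = k from by omega, if_pos rfl]
        omega
    · refine ⟨⟨j.val / m, by omega⟩, ?_, ?_⟩
      · simp only [hbnd]
        rw [if_neg (by omega)]
        exact Nat.div_mul_le_self _ _
      · simp only [hbnd]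
        rw [if_neg (by omega)]
        have hexp : (j.val / m + 1) * m = m * (j.val / m) + m := by ring
        omega
  · -- ratio bound
    intro i
    obtain ⟨h1, h2⟩ := hfin i
    have hcut := cut_le N r (bnd i.val) (bnd (i.val + 1) - 1) hN
    have hvol := vol_ge N r (bnd i.val) (bnd (i.val + 1) - 1) m hN (by omega)
      (by omega) (by omega)
    have hNmpos : 0 < 3 * N * m := Nat.mul_pos (Nat.mul_pos (by omega) (by omega)) (by omega)
    have hVpos : (0 : ℝ) < 3 * N * m := by exact_mod_cast hNmpos
    have hrR : (0 : ℝ) < (r : ℝ) - 1 := by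
      have : (2 : ℝ) ≤ (r : ℝ) := by exact_mod_cast (by omega : 2 ≤ r)
      linarith
    have hkeyR : ((r : ℝ) - 1) ≤ 3 * ((k : ℝ) - 1) * (m : ℝ) := by
      have hc := (Nat.cast_le (α := ℝ)).2 hkey
      rw [Nat.cast_sub (by omega), Nat.cast_mul, Nat.cast_mul,
        Nat.cast_sub (by omega)] at hc
      simpa using hc
    have hNR : (0 : ℝ) < (N : ℝ) := by exact_mod_cast (by omega : 0 < N)
    calc (cut (spiderWeb N r) _ : ℝ) / (volume (spiderWeb N r) _ : ℝ)
        ≤ (2 * N : ℝ) / ((3 * N * m : ℕ) : ℝ) := by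
          apply div_le_div₀ (by positivity) (by exact_mod_cast hcut) (by exact_mod_cast hNmpos)
          exact_mod_cast hvol
      _ ≤ 2 * ((k : ℝ) - 1) / ((r : ℝ) - 1) := by
          push_cast
          rw [div_le_div_iff₀ hVpos hrR]
          nlinarith [hkeyR, hNR]

end SpiderWebHelpers

/-- **Proposition 1, ring part.** For `N ≥ 3` and `2 ≤ k ≤ r`, the ring
Cheeger constant of the spider web graph `G_{N,r}` satisfies
`ψ_{N,r}(k) ≤ √(2(1 − cos(π(k−1)/(r−1))))`; that is, there exists a ring partition
`S 1, ..., S k` with `max_i Cut(S i)/Volume(S i) ≤ √(2λ^P_k)`, where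
`λ^P_k = 1 − cos(π(k−1)/(r−1))` is the `k`-th eigenvalue of the normalized Laplacian of the
path graph on `r` vertices. -/
theorem ringCheeger_le_sqrt_path_eigenvalue (N r k : ℕ)
    (hN : 3 ≤ N) (hk : 2 ≤ k) (hkr : k ≤ r) :
    ringCheeger N r k
      ≤ Real.sqrt (2 * (1 - Real.cos (Real.pi * ((k : ℝ) - 1) / ((r : ℝ) - 1)))) ∧
    (∃ S : Fin k → Set (ZMod N × Fin r), IsRingPartition N r k S ∧
      ∀ i, (cut (spiderWeb N r) (S i) : ℝ) / (volume (spiderWeb N r) (S i) : ℝ)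
        ≤ Real.sqrt (2 * (1 - Real.cos (Real.pi * ((k : ℝ) - 1) / ((r : ℝ) - 1))))) := by
  obtain ⟨S, hpart, hbound⟩ := main_construction N r k hN hk hkr
  have htarget := target_ge k r hk hkr
  haveI : Nonempty (Fin k) := ⟨⟨0, by omega⟩⟩
  have hbound' : ∀ i, (cut (spiderWeb N r) (S i) : ℝ) / (volume (spiderWeb N r) (S i) : ℝ)
      ≤ Real.sqrt (2 * (1 - Real.cos (Real.pi * ((k : ℝ) - 1) / ((r : ℝ) - 1)))) :=
    fun i => (hbound i).trans htarget
  refine ⟨?_, S, hpart, hbound'⟩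
  have hbdd : BddBelow {x : ℝ | ∃ S : Fin k → Set (ZMod N × Fin r), IsRingPartition N r k S ∧
      x = ⨆ i, (cut (spiderWeb N r) (S i) : ℝ) / (volume (spiderWeb N r) (S i) : ℝ)} := by
    refine ⟨0, ?_⟩
    rintro x ⟨T, hT, rfl⟩
    exact Real.iSup_nonneg fun i => div_nonneg (Nat.cast_nonneg _) (Nat.cast_nonneg _)
  have hmem : (⨆ i, (cut (spiderWeb N r) (S i) : ℝ) / (volume (spiderWeb N r) (S i) : ℝ))
      ∈ {x : ℝ | ∃ S : Fin k → Set (ZMod N × Fin r), IsRingPartition N r k S ∧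
      x = ⨆ i, (cut (spiderWeb N r) (S i) : ℝ) / (volume (spiderWeb N r) (S i) : ℝ)} :=
    ⟨S, hpart, rfl⟩
  exact le_trans (csInf_le hbdd hmem) (ciSup_le hbound')
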